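/- In the setting of the finite-horizon augmented-state decision problem, if the exogenous information W neither affects the reward nor the state transition — i.e., R(s, a, w) = R̄(s, a) for all w and f^S(s, a, w) = f̄(s, a) for all w — then the optimal value functions coincide: for every step k and state s, E_{W_k}[Ṽ_k*(s, W_k) | S_k = s] = V_k*(s), so the optimal augmented-state policy achieves exactly the same expected total reward as the optimal original policy. -/
import Mathlib


open Finset

/-- Optimal value function of the original problem, where the agent observes only
`S_k`; `k` counts remaining steps, exogenous information at state `s` is
`W = fW s ξ` with i.i.d. noise `ξ ~ p`. -/
noncomputable def Vorig {S A 𝒲 Ξ : Type*} [Fintype Ξ]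
    (R : S → A → 𝒲 → ℝ) (fS : S → A → 𝒲 → S)
    (fW : S → Ξ → 𝒲) (p : Ξ → ℝ) : ℕ → S → ℝ
  | 0, s => ⨆ a : A, ∑ ξ, p ξ * R s a (fW s ξ)
  | n + 1, s => ⨆ a : A,
      ∑ ξ, p ξ * (R s a (fW s ξ) + Vorig R fS fW p n (fS s a (fW s ξ)))

/-- Optimal value function of the augmented problem, where the agent observes
`(S_k, W_k)`. -/
noncomputable def Vaug {S A 𝒲 Ξ : Type*} [Fintype Ξ]
    (R : S → A → 𝒲 → ℝ) (fS : S → A → 𝒲 → S)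
    (fW : S → Ξ → 𝒲) (p : Ξ → ℝ) : ℕ → S → 𝒲 → ℝ
  | 0, s, w => ⨆ a : A, R s a w
  | n + 1, s, w => ⨆ a : A,
      (R s a w + ∑ ξ, p ξ * Vaug R fS fW p n (fS s a w) (fW (fS s a w) ξ))

/-- Theorem 3 of the paper: if the exogenous information `W`
affects neither the reward nor the state transition, then the optimal value
functions coincide: `E_{W_k}[Ṽ_k*(s, W_k) | S_k = s] = V_k*(s)` for all `k, s`. -/
theorem augmented_value_eq_original_of_irrelevant {S A 𝒲 Ξ : Type*}
    [Fintype Ξ] [Fintype A] [Nonempty A]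
    (R : S → A → 𝒲 → ℝ) (fS : S → A → 𝒲 → S) (fW : S → Ξ → 𝒲)
    (p : Ξ → ℝ) (hp : ∀ ξ, 0 ≤ p ξ) (hp1 : ∑ ξ, p ξ = 1)
    (hR : ∀ s a w w', R s a w = R s a w')
    (hf : ∀ s a w w', fS s a w = fS s a w') :
    ∀ (k : ℕ) (s : S),
      (∑ ξ, p ξ * Vaug (A := A) R fS fW p k s (fW s ξ)) =
        Vorig (A := A) R fS fW p k s := by
  have key : ∀ (k : ℕ) (s : S) (w : 𝒲),
      Vaug (A := A) R fS fW p k s w = Vorig (A := A) R fS fW p k s := by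
    intro k
    induction k with
    | zero =>
      intro s w
      simp only [Vaug, Vorig]
      congr 1; funext a
      have : ∀ ξ, p ξ * R s a (fW s ξ) = p ξ * R s a w := fun ξ => by
        rw [hR s a (fW s ξ) w]
      rw [Finset.sum_congr rfl (fun ξ _ => this ξ), ← Finset.sum_mul, hp1, one_mul]
    | succ n ih =>
      intro s w
      simp only [Vaug, Vorig]
      congr 1; funext a
      have hsum : ∑ ξ, p ξ * Vaug (A := A) R fS fW p n (fS s a w) (fW (fS s a w) ξ)
          = Vorig (A := A) R fS fW p n (fS s a w) := by
        rw [Finset.sum_congr rfl (fun ξ _ => by rw [ih]), ← Finset.sum_mul, hp1, one_mul]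
      rw [hsum]
      have : ∀ ξ, p ξ * (R s a (fW s ξ) + Vorig (A := A) R fS fW p n (fS s a (fW s ξ)))
          = p ξ * (R s a w + Vorig (A := A) R fS fW p n (fS s a w)) := fun ξ => by
        rw [hR s a (fW s ξ) w, hf s a (fW s ξ) w]
      rw [Finset.sum_congr rfl (fun ξ _ => this ξ), ← Finset.sum_mul, hp1, one_mul]
  intro k s
  rw [Finset.sum_congr rfl (fun ξ _ => by rw [key k s (fW s ξ)]), ← Finset.sum_mul,
    hp1, one_mul]
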